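/- arXiv:1805.04896 — 2 statements merged into one kernel-verified Lean document; each statement's English description precedes it below -/
import Mathlib

section
/- Let n ≥ 1 and let e, ẽ, ρ, ρ̃ ∈ ℤⁿ satisfy ⟨e,ρ⟩ = ⟨ẽ,ρ̃⟩ = −1. Then the identity ⟨m,ρ̃⟩·⟨ẽ,ρ⟩ = ⟨m,ρ⟩·⟨e,ρ̃⟩ holds for all m ∈ ℤⁿ if and only if either ⟨ẽ,ρ⟩ = ⟨e,ρ̃⟩ = 0, or ρ = ρ̃ (and in the latter case necessarily ⟨ẽ,ρ⟩ = ⟨e,ρ̃⟩ = −1). -/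
/- STATEMENT 2: combinatorial core of the commuting criterion for vertical
derivations: for `e, e', ρ, ρ' ∈ ℤⁿ` with `⟨e,ρ⟩ = ⟨e',ρ'⟩ = −1`, the identity
`⟨m,ρ'⟩⟨e',ρ⟩ = ⟨m,ρ⟩⟨e,ρ'⟩` holds for all `m ∈ ℤⁿ` iff either
`⟨e',ρ⟩ = ⟨e,ρ'⟩ = 0`, or `ρ = ρ'` (in which case `⟨e',ρ⟩ = ⟨e,ρ'⟩ = −1`). -/

/-- standard pairing `⟨m,v⟩ = Σᵢ mᵢ vᵢ` on `ℤⁿ`. -/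
def pairZ {n : ℕ} (m v : Fin n → ℤ) : ℤ := ∑ i, m i * v i

lemma pairZ_single {n : ℕ} (j : Fin n) (v : Fin n → ℤ) :
    pairZ (Pi.single j 1) v = v j := by
  simp [pairZ, Pi.single_apply, ite_mul]

theorem vertical_commuting_combinatorial_core
    {n : ℕ} (hn : 1 ≤ n) (e e' ρ ρ' : Fin n → ℤ)
    (he : pairZ e ρ = -1) (he' : pairZ e' ρ' = -1) :
    (∀ m : Fin n → ℤ, pairZ m ρ' * pairZ e' ρ = pairZ m ρ * pairZ e ρ')
    ↔ (pairZ e' ρ = 0 ∧ pairZ e ρ' = 0)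
      ∨ (ρ = ρ' ∧ pairZ e' ρ = -1 ∧ pairZ e ρ' = -1) := by
  constructor
  · intro h
    have h1 := h e
    have h2 := h e'
    rw [he] at h1
    rw [he'] at h2
    -- h1 : pairZ e ρ' * pairZ e' ρ = -1 * pairZ e ρ'
    -- h2 : -1 * pairZ e' ρ = pairZ e' ρ * pairZ e ρ'
    set a := pairZ e' ρ with ha
    set b := pairZ e ρ' with hb
    have hab : a = b := by nlinarith [h1, h2]
    have hcase : a = 0 ∨ a = -1 := by
      have h3 : a * a = -a := by rw [← hab] at h2; linarith
      have : a * (a + 1) = 0 := by linear_combination h3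
      rcases mul_eq_zero.mp this with h' | h'
      · exact Or.inl h'
      · exact Or.inr (by linarith)
    rcases hcase with h0 | hm1
    · exact Or.inl ⟨h0, hab ▸ h0⟩
    · refine Or.inr ⟨?_, hm1, hab ▸ hm1⟩
      funext j
      have hj := h (Pi.single j 1)
      rw [pairZ_single, pairZ_single, hm1, ← hab, hm1] at hj
      linarith
  · rintro (⟨h1, h2⟩ | ⟨hρ, h1, h2⟩) <;> intro m
    · rw [h1, h2]; ring
    · rw [h1, h2, hρ]
end

section
/- For all e, ρ ∈ ℤⁿ, φ ∈ F, ẽ ∈ ℤⁿ, s ∈ ℤ, d a positive integer, u ∈ ℤⁿ and m ∈ ℤⁿ, the commutator of the vertical-type derivation D_{e,ρ,φ} and the simple horizontal-type derivation E_{ẽ,s,d,u} satisfies [D_{e,ρ,φ}, E_{ẽ,s,d,u}](χ^m) = d·( v₀(m)·⟨ẽ,ρ⟩·φ − ⟨m,ρ⟩·(φ′·t + φ·v₀(e)) )·t^s·χ^{m+e+ẽ}, where v₀(x) = ⟨x,u⟩/d. -/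
/- STATEMENT 5: commutator of a vertical-type derivation `D_{e,ρ,φ}` and a
simple horizontal-type derivation `E_{e',s,d,u}` applied to `χ^m`:
`[D,E](χ^m) = d·(v₀(m)·⟨e',ρ⟩·φ − ⟨m,ρ⟩·(φ′·t + φ·v₀(e)))·t^s·χ^{m+e+e'}`,
where `v₀(x) = ⟨x,u⟩/d`. -/

noncomputable section

/-- derivative `f ↦ df/dt` of a rational function `f ∈ K(t)`. -/
def rderiv {K : Type*} [Field K] (φ : RatFunc K) : RatFunc K :=
  (algebraMap (Polynomial K) (RatFunc K) (Polynomial.derivative φ.num)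
      * algebraMap (Polynomial K) (RatFunc K) φ.denom
    - algebraMap (Polynomial K) (RatFunc K) φ.num
      * algebraMap (Polynomial K) (RatFunc K) (Polynomial.derivative φ.denom))
    / (algebraMap (Polynomial K) (RatFunc K) φ.denom) ^ 2

/-- Vertical-type derivation `D_{e,ρ,φ}` on the group algebra `B = K(t)[ℤⁿ]`,
determined by `f·χ^m ↦ ⟨m,ρ⟩·φ·f·χ^{m+e}`. -/
def Dvert {K : Type*} [Field K] {n : ℕ} (e ρ : Fin n → ℤ) (φ : RatFunc K)
    (b : (Fin n → ℤ) →₀ RatFunc K) : (Fin n → ℤ) →₀ RatFunc K :=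
  b.sum fun m f => Finsupp.single (m + e) ((pairZ m ρ : RatFunc K) * φ * f)

/-- Simple horizontal-type derivation `E_{e',s,d,u}` on `B = K(t)[ℤⁿ]`,
determined by `f·χ^m ↦ t^s·(⟨m,u⟩·f + d·t·f′)·χ^{m+e'}`. -/
def Ehor {K : Type*} [Field K] {n : ℕ} (e' : Fin n → ℤ) (s : ℤ) (d : ℤ)
    (u : Fin n → ℤ) (b : (Fin n → ℤ) →₀ RatFunc K) : (Fin n → ℤ) →₀ RatFunc K :=
  b.sum fun m f => Finsupp.single (m + e')
    ((RatFunc.X : RatFunc K) ^ s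
      * ((pairZ m u : RatFunc K) * f + (d : RatFunc K) * RatFunc.X * rderiv f))


lemma rderiv_zero {K : Type*} [Field K] : rderiv (0 : RatFunc K) = 0 := by
  simp [rderiv]

lemma rderiv_one {K : Type*} [Field K] : rderiv (1 : RatFunc K) = 0 := by
  simp [rderiv]

lemma pairZ_add_left {n : ℕ} (m m' v : Fin n → ℤ) :
    pairZ (m + m') v = pairZ m v + pairZ m' v := by
  simp [pairZ, add_mul, Finset.sum_add_distrib]

lemma rderiv_eq {K : Type*} [Field K] (p q : Polynomial K) (hq : q ≠ 0) :
    rderiv (algebraMap (Polynomial K) (RatFunc K) p / algebraMap _ _ q)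
      = algebraMap (Polynomial K) (RatFunc K)
          (Polynomial.derivative p * q - p * Polynomial.derivative q)
        / algebraMap _ _ (q ^ 2) := by
  set φ := algebraMap (Polynomial K) (RatFunc K) p / algebraMap _ _ q with hφ
  have hcross : φ.num * q = p * φ.denom := by
    have h1 : algebraMap (Polynomial K) (RatFunc K) φ.num / algebraMap _ _ φ.denom
        = algebraMap (Polynomial K) (RatFunc K) p / algebraMap _ _ q :=
      by rw [RatFunc.num_div_denom]
    have hD : (algebraMap (Polynomial K) (RatFunc K)) φ.denom ≠ 0 := by
      simpa using φ.denom_ne_zero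
    have hq' : (algebraMap (Polynomial K) (RatFunc K)) q ≠ 0 := by simpa using hq
    rw [div_eq_div_iff hD hq'] at h1
    exact (IsFractionRing.injective (Polynomial K) (RatFunc K))
      (by push_cast [map_mul] at h1 ⊢; exact h1)
  have hcross' := congrArg Polynomial.derivative hcross
  rw [Polynomial.derivative_mul, Polynomial.derivative_mul] at hcross'
  have key : (Polynomial.derivative φ.num * φ.denom
        - φ.num * Polynomial.derivative φ.denom) * q ^ 2
      = (Polynomial.derivative p * q - p * Polynomial.derivative q) * φ.denom ^ 2 := by
    linear_combination (φ.denom * q) * hcross'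
      - (Polynomial.derivative q * φ.denom + Polynomial.derivative φ.denom * q) * hcross
  have hD : (algebraMap (Polynomial K) (RatFunc K)) φ.denom ≠ 0 := by
    simpa using φ.denom_ne_zero
  have hq' : (algebraMap (Polynomial K) (RatFunc K)) q ≠ 0 := by simpa using hq
  rw [rderiv, div_eq_div_iff (pow_ne_zero 2 hD) (by simpa [map_pow] using pow_ne_zero 2 hq')]
  have := congrArg (algebraMap (Polynomial K) (RatFunc K)) key
  push_cast [map_mul, map_sub, map_pow] at this ⊢
  linear_combination this

lemma rderiv_intCast_mul {K : Type*} [Field K] (c : ℤ) (φ : RatFunc K) :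
    rderiv ((c : RatFunc K) * φ) = (c : RatFunc K) * rderiv φ := by
  by_cases hc : (c : K) = 0
  · have : (c : RatFunc K) = 0 := by
      rw [show ((c : RatFunc K)) = algebraMap K (RatFunc K) (c : K) by push_cast; simp, hc,
        map_zero]
    simp [this, rderiv_zero]
  · have hcR : (c : RatFunc K) = algebraMap (Polynomial K) (RatFunc K) (Polynomial.C (c : K)) := by
      simp
    have h1 : (c : RatFunc K) * φ
        = algebraMap (Polynomial K) (RatFunc K) (Polynomial.C (c : K) * φ.num)
          / algebraMap _ _ φ.denom := by
      rw [map_mul, mul_div_assoc, RatFunc.num_div_denom, hcR]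
    have h2 : φ = algebraMap (Polynomial K) (RatFunc K) φ.num / algebraMap _ _ φ.denom :=
      (RatFunc.num_div_denom φ).symm
    rw [h1, rderiv_eq _ _ φ.denom_ne_zero]
    conv_rhs => rw [h2, rderiv_eq _ _ φ.denom_ne_zero]
    rw [Polynomial.derivative_mul, Polynomial.derivative_C]
    push_cast [map_mul, map_sub, map_add, hcR]
    ring

theorem commutator_vertical_horizontal_on_chi
    {K : Type*} [Field K] [IsAlgClosed K] [CharZero K] {n : ℕ} (hn : 1 ≤ n)
    (e ρ : Fin n → ℤ) (φ : RatFunc K) (e' : Fin n → ℤ) (s : ℤ) (d : ℤ)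
    (hd : 0 < d) (u : Fin n → ℤ) (m : Fin n → ℤ) :
    Dvert e ρ φ (Ehor e' s d u (Finsupp.single m (1 : RatFunc K)))
      - Ehor e' s d u (Dvert e ρ φ (Finsupp.single m (1 : RatFunc K)))
    = Finsupp.single (m + e + e')
        ((d : RatFunc K)
          * (((pairZ m u : RatFunc K) / (d : RatFunc K)) * (pairZ e' ρ : RatFunc K) * φ
            - (pairZ m ρ : RatFunc K)
              * (rderiv φ * RatFunc.X + φ * ((pairZ e u : RatFunc K) / (d : RatFunc K))))
          * (RatFunc.X : RatFunc K) ^ s) := by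
  have hd0 : ((d : RatFunc K)) ≠ 0 := by
    have h : ((d : RatFunc K)) = algebraMap K (RatFunc K) (d : K) := by push_cast; simp
    rw [h, map_ne_zero_iff _ (algebraMap K (RatFunc K)).injective]
    exact Int.cast_ne_zero.mpr hd.ne'
  have E1 : Ehor e' s d u (Finsupp.single m (1 : RatFunc K))
      = Finsupp.single (m + e') ((RatFunc.X : RatFunc K) ^ s * (pairZ m u : RatFunc K)) := by
    rw [Ehor, Finsupp.sum_single_index (by simp [rderiv_zero])]
    simp [rderiv_one]
  have D1 : Dvert e ρ φ (Finsupp.single m (1 : RatFunc K))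
      = Finsupp.single (m + e) ((pairZ m ρ : RatFunc K) * φ) := by
    rw [Dvert, Finsupp.sum_single_index (by simp)]
    simp
  rw [E1, D1, Dvert, Ehor,
    Finsupp.sum_single_index (by simp),
    Finsupp.sum_single_index (by simp [rderiv_zero])]
  have hidx : m + e' + e = m + e + e' := by
    funext i; simp; ring
  rw [hidx, ← Finsupp.single_sub]
  congr 1
  rw [rderiv_intCast_mul (pairZ m ρ) φ]
  push_cast [pairZ_add_left]
  field_simp
  ring
end
end
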